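/- Let g and h be finite-order linear automorphisms of a finite dimensional complex inner product space V acting by isometries. If (V^g)^⊥ ∩ (V^h)^⊥ = {0}, then codim V^{gh} = codim V^g + codim V^h. -/

import Mathlib

lemma aux_perp {V : Type*} [NormedAddCommGroup V] [InnerProductSpace ℂ V]
    (k : V →ₗ[ℂ] V) (hk : ∀ x y : V, (inner ℂ (k x) (k y) : ℂ) = inner ℂ x y) (x : V) :
    x - k x ∈ (LinearMap.eqLocus k 1)ᗮ := by
  intro y hy
  have hy' : k y = y := hy
  have : (inner ℂ y (k x) : ℂ) = inner ℂ y x := by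
    conv_lhs => rw [← hy']
    exact hk y x
  simp [inner_sub_right, this]

/-- For unitary finite-order operators `g, h` on a finite dimensional complex inner
product space, if `(V^g)ᗮ ⊓ (V^h)ᗮ = ⊥` then `codim V^{gh} = codim V^g + codim V^h`. -/
theorem stmt_2 {V : Type*} [NormedAddCommGroup V] [InnerProductSpace ℂ V]
    [FiniteDimensional ℂ V] (g h : V →ₗ[ℂ] V)
    (hg : ∀ x y : V, (inner ℂ (g x) (g y) : ℂ) = inner ℂ x y)
    (hh : ∀ x y : V, (inner ℂ (h x) (h y) : ℂ) = inner ℂ x y)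
    (ng nh : ℕ) (hng : 0 < ng) (hnh : 0 < nh)
    (hgord : g ^ ng = 1) (hhord : h ^ nh = 1)
    (hdisj : (LinearMap.eqLocus g 1)ᗮ ⊓ (LinearMap.eqLocus h 1)ᗮ = ⊥) :
    Module.finrank ℂ V - Module.finrank ℂ (LinearMap.eqLocus (g * h) 1) =
      (Module.finrank ℂ V - Module.finrank ℂ (LinearMap.eqLocus g 1)) +
      (Module.finrank ℂ V - Module.finrank ℂ (LinearMap.eqLocus h 1)) := by
  set G := LinearMap.eqLocus g 1 with hG
  set H := LinearMap.eqLocus h 1 with hH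
  -- Step 1: V^{gh} = V^g ⊓ V^h
  have hfix : LinearMap.eqLocus (g * h) 1 = G ⊓ H := by
    apply le_antisymm
    · intro x hx
      have hx' : g (h x) = x := hx
      have h1 : h x - x ∈ Gᗮ := by
        have := aux_perp g hg (h x)
        rwa [hx'] at this
      have h2 : h x - x ∈ Hᗮ := by
        have h3 := Submodule.neg_mem Hᗮ (aux_perp h hh x)
        simpa using h3
      have hmem : h x - x ∈ Gᗮ ⊓ Hᗮ := ⟨h1, h2⟩
      rw [hdisj] at hmem
      have hhx : h x = x := sub_eq_zero.mp ((Submodule.mem_bot ℂ).mp hmem)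
      refine ⟨?_, hhx⟩
      show g x = x
      rw [hhx] at hx'
      exact hx'
    · rintro x ⟨hxg, hxh⟩
      have hxg' : g x = x := hxg
      have hxh' : h x = x := hxh
      show g (h x) = x
      rw [hxh', hxg']
  -- Step 2: dimension count
  have key : ∀ K : Submodule ℂ V, Module.finrank ℂ V - Module.finrank ℂ K
      = Module.finrank ℂ Kᗮ := by
    intro K
    have := Submodule.finrank_add_finrank_orthogonal (K := K)
    omega
  rw [hfix, key, key, key]
  have e : (Gᗮ ⊔ Hᗮ)ᗮ = G ⊓ H := by
    rw [← Submodule.inf_orthogonal, Submodule.orthogonal_orthogonal,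
      Submodule.orthogonal_orthogonal]
  have horth : (G ⊓ H)ᗮ = Gᗮ ⊔ Hᗮ := by
    rw [← e, Submodule.orthogonal_orthogonal]
  rw [horth]
  have hsum := Submodule.finrank_sup_add_finrank_inf_eq Gᗮ Hᗮ
  rw [hdisj] at hsum
  simp at hsum
  omega
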